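/- Assume each φ_{ij} is convex, λ > 0, and ν > 0, R > 0. Let (x^k)_{k≥0} in ℝ^d and reals h_{ij}^k (i ∈ [n], j ∈ [m], k ≥ 0) satisfy: for every k and every i, j, h_{ij}^k is a convex combination of h_{ij}(x^0), h_{ij}(x^1), …, h_{ij}(x^k); and x^{k+1} = x^k − (H^k + λ I)^{-1} ∇P(x^k) where H^k = (1/(nm)) Σ_{i,j} h_{ij}^k a_{ij} a_{ij}ᵀ. If ‖x^0 − x*‖² ≤ λ²/(12 ν² R⁶), then ‖x^k − x*‖² ≤ λ²/(12 ν² R⁶) for all k ≥ 0. -/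

import Mathlib

open MeasureTheory Filter
open scoped BigOperators

noncomputable section

abbrev Euc (d : ℕ) := EuclideanSpace ℝ (Fin d)

/-- Real inner product on Euclidean space. -/
def rinner {d : ℕ} (a x : Euc d) : ℝ := inner ℝ a x

/-- The rank-one matrix `a aᵀ`. -/
def outerMat {d : ℕ} (a : Euc d) : Matrix (Fin d) (Fin d) ℝ := fun p q => a p * a q

/-- `(1/(nm)) ∑_{ij} c_{ij} a_{ij} a_{ij}ᵀ`. -/
def Hmat {n m d : ℕ} (a : Fin n → Fin m → Euc d) (c : Fin n → Fin m → ℝ) :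
    Matrix (Fin d) (Fin d) ℝ :=
  ((n : ℝ) * m)⁻¹ • ∑ i, ∑ j, c i j • outerMat (a i j)

/-- Matrix-vector multiplication as a map on Euclidean space. -/
def mulVecE {d : ℕ} (M : Matrix (Fin d) (Fin d) ℝ) (v : Euc d) : Euc d := WithLp.toLp 2 (M.mulVec v)

/-- The vector `h_i(y) = (φ''_{i1}(⟨a_{i1},y⟩), …, φ''_{im}(⟨a_{im},y⟩)) ∈ ℝ^m`. -/
def hvecOf {n m d : ℕ} (a : Fin n → Fin m → Euc d) (φ'' : Fin n → Fin m → ℝ → ℝ)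
    (i : Fin n) (y : Euc d) : Euc m :=
  WithLp.toLp 2 (fun j => φ'' i j (rinner (a i j) y))

/-- Componentwise positive part on ℝ^m. -/
def posPartE {m : ℕ} (v : Euc m) : Euc m := WithLp.toLp 2 (fun j => max (v j) 0)

/-! ### Auxiliary lemmas -/

lemma grad_aux {n m d : ℕ} (a : Fin n → Fin m → Euc d) (φ : Fin n → Fin m → ℝ → ℝ)
    (hsmooth : ∀ i j, ContDiff ℝ 2 (φ i j)) (lam : ℝ)
    (P : Euc d → ℝ)
    (hP : ∀ y, P y = ((n : ℝ) * m)⁻¹ * (∑ i, ∑ j, φ i j (rinner (a i j) y))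
        + lam / 2 * ‖y‖ ^ 2) (y : Euc d) :
    HasGradientAt P
      (((n : ℝ) * m)⁻¹ • (∑ i, ∑ j, deriv (φ i j) (rinner (a i j) y) • a i j) + lam • y) y := by
  have hPf : P = fun z => ((n : ℝ) * m)⁻¹ * (∑ i, ∑ j, φ i j (rinner (a i j) z))
      + lam / 2 * ‖z‖ ^ 2 := funext hP
  have h1 : ∀ i j, HasFDerivAt (fun z : Euc d => φ i j (rinner (a i j) z))
      ((deriv (φ i j) (rinner (a i j) y)) • (innerSL ℝ (a i j))) y := by
    intro i j
    have hd : HasDerivAt (φ i j) (deriv (φ i j) (rinner (a i j) y)) (rinner (a i j) y) :=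
      (((hsmooth i j).differentiable (by norm_num)) _).hasDerivAt
    have hi : HasFDerivAt (fun z : Euc d => rinner (a i j) z) (innerSL ℝ (a i j)) y :=
      by convert (innerSL ℝ (a i j)).hasFDerivAt (x := y) using 1; ext z; simp [rinner]
    exact hd.comp_hasFDerivAt y hi
  have hS : HasFDerivAt (fun z : Euc d => ∑ i, ∑ j, φ i j (rinner (a i j) z))
      (∑ i, ∑ j, (deriv (φ i j) (rinner (a i j) y)) • (innerSL ℝ (a i j))) y :=
    HasFDerivAt.fun_sum fun i _ => HasFDerivAt.fun_sum fun j _ => h1 i j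
  have h2 : HasFDerivAt (fun z : Euc d => ‖z‖ ^ 2)
      ((fderivInnerCLM ℝ (y, y)).comp ((ContinuousLinearMap.id ℝ (Euc d)).prod
        (ContinuousLinearMap.id ℝ (Euc d)))) y := by
    have h := (hasFDerivAt_id (𝕜 := ℝ) y).inner ℝ (hasFDerivAt_id y)
    exact h.congr_of_eventuallyEq (Filter.Eventually.of_forall fun z => by
      show ‖z‖ ^ 2 = (inner ℝ (id z) (id z) : ℝ)
      simp only [id_eq]; rw [real_inner_self_eq_norm_sq])
  have hF : HasFDerivAt P
      (((n : ℝ) * m)⁻¹ • (∑ i, ∑ j, (deriv (φ i j) (rinner (a i j) y)) • (innerSL ℝ (a i j)))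
        + (lam / 2) • ((fderivInnerCLM ℝ (y, y)).comp ((ContinuousLinearMap.id ℝ (Euc d)).prod
          (ContinuousLinearMap.id ℝ (Euc d))))) y := by
    rw [hPf]
    exact (hS.const_mul _).add (h2.const_mul _)
  refine hasGradientAt_iff_hasFDerivAt.mpr ?_
  have heq : (InnerProductSpace.toDual ℝ (Euc d))
      (((n : ℝ) * m)⁻¹ • (∑ i, ∑ j, deriv (φ i j) (rinner (a i j) y) • a i j) + lam • y)
      = (((n : ℝ) * m)⁻¹ • (∑ i, ∑ j, (deriv (φ i j) (rinner (a i j) y)) • (innerSL ℝ (a i j)))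
        + (lam / 2) • ((fderivInnerCLM ℝ (y, y)).comp ((ContinuousLinearMap.id ℝ (Euc d)).prod
          (ContinuousLinearMap.id ℝ (Euc d))))) := by
    refine ContinuousLinearMap.ext fun w => ?_
    simp only [InnerProductSpace.toDual_apply_apply, ContinuousLinearMap.add_apply,
      ContinuousLinearMap.smul_apply, ContinuousLinearMap.coe_sum', Finset.sum_apply,
      ContinuousLinearMap.coe_comp', Function.comp_apply, ContinuousLinearMap.prod_apply,
      ContinuousLinearMap.coe_id', id_eq, fderivInnerCLM_apply, innerSL_apply_apply,
      inner_add_left, inner_smul_left, inner_sum, sum_inner, real_inner_smul_left,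
      smul_eq_mul, RCLike.inner_apply, conj_trivial]
    rw [real_inner_comm w y]
    ring
  rw [heq]; exact hF

lemma mono_deriv_nonneg {g : ℝ → ℝ} {g' x : ℝ} (hm : Monotone g) (h : HasDerivAt g g' x) :
    0 ≤ g' := by
  have h' : Filter.Tendsto (slope g x) (nhdsWithin x (Set.Ioi x)) (nhds g') :=
    (hasDerivAt_iff_tendsto_slope.mp h).mono_left
      (nhdsWithin_mono x fun y hy => ne_of_gt hy)
  refine ge_of_tendsto h' ?_
  filter_upwards [self_mem_nhdsWithin] with y hy
  rw [slope_def_field]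
  exact div_nonneg (sub_nonneg.mpr (hm (le_of_lt hy))) (sub_nonneg.mpr (le_of_lt hy))

lemma taylor_aux {φ : ℝ → ℝ} (hs : ContDiff ℝ 2 φ) {ν : ℝ} (hν : 0 ≤ ν)
    (hlip : ∀ s t, |deriv (deriv φ) s - deriv (deriv φ) t| ≤ ν * |s - t|) (s t : ℝ) :
    |deriv φ s - deriv φ t - deriv (deriv φ) t * (s - t)| ≤ ν * (s - t) ^ 2 := by
  have hd1 : ContDiff ℝ 1 (deriv φ) := by
    have := (contDiff_succ_iff_deriv (n := 1)).mp (by exact_mod_cast hs)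
    exact this.2.2
  have hd2 : ∀ u, HasDerivAt (deriv φ) (deriv (deriv φ) u) u := fun u =>
    ((hd1.differentiable (by norm_num)) u).hasDerivAt
  set c := deriv (deriv φ) t with hc
  set g : ℝ → ℝ := fun u => deriv φ u - c * u with hg
  have hgd : ∀ u, HasDerivAt g (deriv (deriv φ) u - c) u := fun u => by
    have h := (hd2 u).sub ((hasDerivAt_id' u).const_mul c); rw [mul_one] at h; exact h
  have key : ‖g s - g t‖ ≤ (ν * |s - t|) * ‖s - t‖ := by
    refine Convex.norm_image_sub_le_of_norm_deriv_le
      (fun u _ => (hgd u).differentiableAt) (fun u hu => ?_)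
      (convex_uIcc t s) (Set.left_mem_uIcc) (Set.right_mem_uIcc)
    rw [(hgd u).deriv, Real.norm_eq_abs]
    refine (hlip u t).trans ?_
    have h1 : |u - t| ≤ |s - t| := by
      rcases le_total t s with h | h
      · rw [Set.uIcc_of_le h] at hu
        rw [abs_of_nonneg (by linarith [hu.1]), abs_of_nonneg (by linarith)]
        linarith [hu.2]
      · rw [Set.uIcc_of_ge h] at hu
        rw [abs_of_nonpos (by linarith [hu.2]), abs_of_nonpos (by linarith)]
        linarith [hu.1]
    exact mul_le_mul_of_nonneg_left h1 hν
  have hgs : g s - g t = deriv φ s - deriv φ t - c * (s - t) := by simp [hg]; ring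
  rw [hgs, Real.norm_eq_abs, Real.norm_eq_abs] at key
  calc |deriv φ s - deriv φ t - c * (s - t)| ≤ ν * |s - t| * |s - t| := key
    _ = ν * (s - t) ^ 2 := by rw [mul_assoc, abs_mul_abs_self, sq]

lemma det_unit_of_pos {d : ℕ} {lam : ℝ} (hlam : 0 < lam) (M : Matrix (Fin d) (Fin d) ℝ)
    (hpos : ∀ w : Euc d, lam * ‖w‖ ^ 2 ≤ inner ℝ (mulVecE M w) w) : IsUnit M.det := by
  refine isUnit_iff_ne_zero.mpr fun h => ?_
  obtain ⟨v, hv0, hv⟩ := (Matrix.exists_mulVec_eq_zero_iff).mpr h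
  have hp := hpos (WithLp.toLp 2 v)
  have hz : mulVecE M (WithLp.toLp 2 v) = 0 := by simp [mulVecE, hv]
  rw [hz, inner_zero_left] at hp
  have hvn : (0:ℝ) < ‖(WithLp.toLp 2 v : Euc d)‖ :=
    norm_pos_iff.mpr fun h => hv0 (by simpa using congrArg WithLp.ofLp h)
  have := mul_pos hlam (pow_pos hvn 2)
  linarith

lemma inv_bound {d : ℕ} {lam : ℝ} (hlam : 0 < lam) (M : Matrix (Fin d) (Fin d) ℝ)
    (hpos : ∀ w : Euc d, lam * ‖w‖ ^ 2 ≤ inner ℝ (mulVecE M w) w) (u : Euc d) :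
    ‖mulVecE M⁻¹ u‖ ≤ lam⁻¹ * ‖u‖ := by
  have hunit : IsUnit M.det := det_unit_of_pos hlam M hpos
  set w := mulVecE M⁻¹ u with hw
  have hMw : mulVecE M w = u := by
    simp only [hw, mulVecE, WithLp.ofLp_toLp, Matrix.mulVec_mulVec, Matrix.mul_nonsing_inv M hunit,
      Matrix.one_mulVec, WithLp.toLp_ofLp]
  have key : lam * ‖w‖ ^ 2 ≤ ‖u‖ * ‖w‖ := by
    refine (hpos w).trans ?_
    rw [hMw]
    exact real_inner_le_norm u w
  rcases eq_or_lt_of_le (norm_nonneg w) with h0 | h0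
  · rw [← h0]; positivity
  · rw [inv_mul_eq_div, le_div_iff₀ hlam]
    nlinarith

lemma mulVecE_Hmat {n m d : ℕ} (a : Fin n → Fin m → Euc d) (c : Fin n → Fin m → ℝ)
    (w : Euc d) :
    mulVecE (Hmat a c) w = ((n : ℝ) * m)⁻¹ • ∑ i, ∑ j, (c i j * rinner (a i j) w) • a i j := by
  ext p
  simp only [mulVecE, Hmat, Matrix.mulVec, dotProduct, Matrix.smul_apply,
    Matrix.sum_apply, outerMat, PiLp.smul_apply, Finset.sum_apply, smul_eq_mul,
    rinner, PiLp.inner_apply, RCLike.inner_apply, conj_trivial, Finset.sum_mul,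
    Finset.mul_sum]
  have hap : ∀ {ι : Type} (S : Finset ι) (f : ι → Euc d) (q : Fin d),
      (∑ i ∈ S, f i) q = ∑ i ∈ S, f i q := fun S f q => by
        rw [WithLp.ofLp_sum]; exact Finset.sum_apply q S _
  simp only [hap, PiLp.smul_apply, smul_eq_mul, Finset.mul_sum]
  rw [Finset.sum_comm]
  refine Finset.sum_congr rfl fun i _ => ?_
  rw [Finset.sum_comm]
  refine Finset.sum_congr rfl fun j _ => ?_
  rw [Finset.sum_mul, Finset.mul_sum]
  refine Finset.sum_congr rfl fun q _ => ?_
  ring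

lemma mulVecE_smul_one {d : ℕ} (lam : ℝ) (w : Euc d) :
    mulVecE (lam • (1 : Matrix (Fin d) (Fin d) ℝ)) w = lam • w := by
  ext p
  simp [mulVecE, Matrix.smul_mulVec, Matrix.one_mulVec]

lemma mulVecE_add {d : ℕ} (M N : Matrix (Fin d) (Fin d) ℝ) (w : Euc d) :
    mulVecE (M + N) w = mulVecE M w + mulVecE N w := by
  ext p
  simp [mulVecE, Matrix.add_mulVec]

lemma mulVecE_sub {d : ℕ} (M : Matrix (Fin d) (Fin d) ℝ) (u v : Euc d) :
    mulVecE M (u - v) = mulVecE M u - mulVecE M v := by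
  ext p
  simp [mulVecE, Matrix.mulVec_sub]

lemma mulVecE_cancel {d : ℕ} {M : Matrix (Fin d) (Fin d) ℝ} (h : IsUnit M.det) (v : Euc d) :
    mulVecE M⁻¹ (mulVecE M v) = v := by
  simp only [mulVecE, WithLp.ofLp_toLp, Matrix.mulVec_mulVec, Matrix.nonsing_inv_mul M h,
    Matrix.one_mulVec, WithLp.toLp_ofLp]

lemma sum_smul_sub {n m d : ℕ} (p q : Fin n → Fin m → ℝ) (a : Fin n → Fin m → Euc d) :
    (∑ i, ∑ j, p i j • a i j) - (∑ i, ∑ j, q i j • a i j)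
      = ∑ i, ∑ j, (p i j - q i j) • a i j := by
  rw [← Finset.sum_sub_distrib]
  refine Finset.sum_congr rfl fun i _ => ?_
  rw [← Finset.sum_sub_distrib]
  refine Finset.sum_congr rfl fun j _ => ?_
  rw [sub_smul]

set_option maxHeartbeats 2000000 in
/-- iterates of NL1 remain in the local neighborhood (Lemma 1). -/
theorem nl1_iterates_stay_in_neighborhood
    {n m d : ℕ} (hn : 0 < n) (hm : 0 < m) (hd : 0 < d)
    (ν γ lam R : ℝ) (hν : 0 < ν) (hγ : 0 < γ) (hlam : 0 < lam) (hR : 0 < R)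
    (a : Fin n → Fin m → Euc d) (φ : Fin n → Fin m → ℝ → ℝ)
    (φ'' : Fin n → Fin m → ℝ → ℝ) (hφ'' : ∀ i j, φ'' i j = deriv (deriv (φ i j)))
    (hsmooth : ∀ i j, ContDiff ℝ 2 (φ i j))
    (hbdd : ∀ i j t, |φ'' i j t| ≤ γ)
    (hlip : ∀ i j s t, |φ'' i j s - φ'' i j t| ≤ ν * |s - t|)
    (hconv : ∀ i j, ConvexOn ℝ Set.univ (φ i j))
    (hRub : ∀ i j, ‖a i j‖ ≤ R) (hRmem : ∃ i j, R = ‖a i j‖)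
    (P : Euc d → ℝ)
    (hP : ∀ y, P y = ((n : ℝ) * m)⁻¹ * (∑ i, ∑ j, φ i j (rinner (a i j) y))
        + lam / 2 * ‖y‖ ^ 2)
    (xstar : Euc d) (hmin : ∀ y, P xstar ≤ P y)
    (x : ℕ → Euc d) (c : Fin n → Fin m → ℕ → ℝ)
    (hcc : ∀ k i j, ∃ ρ : ℕ → ℝ, (∀ t, t ≤ k → 0 ≤ ρ t) ∧
        (∑ t ∈ Finset.range (k + 1), ρ t) = 1 ∧
        c i j k = ∑ t ∈ Finset.range (k + 1), ρ t * φ'' i j (rinner (a i j) (x t)))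
    (hstep : ∀ k, x (k + 1) = x k - mulVecE
        (Hmat a (fun i j => c i j k) + lam • (1 : Matrix (Fin d) (Fin d) ℝ))⁻¹
        (gradient P (x k)))
    (h0 : ‖x 0 - xstar‖ ^ 2 ≤ lam ^ 2 / (12 * ν ^ 2 * R ^ 6)) :
    ∀ k, ‖x k - xstar‖ ^ 2 ≤ lam ^ 2 / (12 * ν ^ 2 * R ^ 6) := by
  classical
  set r2 : ℝ := lam ^ 2 / (12 * ν ^ 2 * R ^ 6) with hr2
  have hr2pos : 0 < r2 := by positivity
  set r : ℝ := Real.sqrt r2 with hrdef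
  have hrpos : 0 < r := Real.sqrt_pos.mpr hr2pos
  have hrsq : r ^ 2 = r2 := Real.sq_sqrt hr2pos.le
  have hnm : (0:ℝ) < (n:ℝ) * m := by
    have h1 : (0:ℝ) < (n:ℝ) := Nat.cast_pos.mpr hn
    have h2 : (0:ℝ) < (m:ℝ) := Nat.cast_pos.mpr hm
    positivity
  -- gradient of P
  set G : Euc d → Euc d := fun y =>
    ((n : ℝ) * m)⁻¹ • (∑ i, ∑ j, deriv (φ i j) (rinner (a i j) y) • a i j) + lam • y with hG
  have hgrad : ∀ y, HasGradientAt P (G y) y := fun y => grad_aux a φ hsmooth lam P hP y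
  have hG0 : G xstar = 0 := by
    have hloc : IsLocalMin P xstar := Filter.Eventually.of_forall hmin
    have hz := hloc.hasFDerivAt_eq_zero (hgrad xstar).hasFDerivAt
    have h2 : (InnerProductSpace.toDual ℝ (Euc d)) (G xstar) = 0 := hz
    simpa using (InnerProductSpace.toDual ℝ (Euc d)).map_eq_zero_iff.mp h2
  have hgradP : ∀ y, gradient P y = G y := fun y => (hgrad y).gradient
  -- second derivatives are nonnegative
  have hphi2 : ∀ i j t, 0 ≤ φ'' i j t := by
    intro i j t
    rw [hφ'' i j]
    have hmono : Monotone (deriv (φ i j)) := by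
      have hm := (hconv i j).monotoneOn_deriv
        (fun u _ => ((hsmooth i j).differentiable (by norm_num)) u)
      exact fun u v huv => hm (Set.mem_univ u) (Set.mem_univ v) huv
    have hd1 : ContDiff ℝ 1 (deriv (φ i j)) :=
      ((contDiff_succ_iff_deriv (n := 1)).mp (by exact_mod_cast hsmooth i j)).2.2
    exact mono_deriv_nonneg hmono ((hd1.differentiable (by norm_num)) t).hasDerivAt
  have hcnonneg : ∀ i j k, 0 ≤ c i j k := by
    intro i j k
    obtain ⟨ρ, hρ0, hρ1, hceq⟩ := hcc k i j
    rw [hceq]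
    refine Finset.sum_nonneg fun t ht => mul_nonneg
      (hρ0 t (Nat.lt_succ_iff.mp (Finset.mem_range.mp ht))) (hphi2 i j _)
  -- positive definiteness of the Newton matrices
  have hposM : ∀ k (w : Euc d), lam * ‖w‖ ^ 2 ≤
      inner ℝ (mulVecE (Hmat a (fun i j => c i j k)
        + lam • (1 : Matrix (Fin d) (Fin d) ℝ)) w) w := by
    intro k w
    rw [mulVecE_add, mulVecE_Hmat, mulVecE_smul_one, inner_add_left]
    have h1 : (inner ℝ (((n : ℝ) * m)⁻¹ • ∑ i, ∑ j, (c i j k * rinner (a i j) w) • a i j) w : ℝ)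
        = ((n : ℝ) * m)⁻¹ * ∑ i, ∑ j, c i j k * (rinner (a i j) w) ^ 2 := by
      rw [real_inner_smul_left]
      congr 1
      rw [sum_inner]
      refine Finset.sum_congr rfl fun i _ => ?_
      rw [sum_inner]
      refine Finset.sum_congr rfl fun j _ => ?_
      rw [real_inner_smul_left]
      show (c i j k * rinner (a i j) w) * rinner (a i j) w = _
      ring
    rw [h1, real_inner_smul_left, real_inner_self_eq_norm_sq]
    have h2 : 0 ≤ ((n : ℝ) * m)⁻¹ * ∑ i, ∑ j, c i j k * (rinner (a i j) w) ^ 2 := by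
      refine mul_nonneg (by positivity) (Finset.sum_nonneg fun i _ =>
        Finset.sum_nonneg fun j _ => mul_nonneg (hcnonneg i j k) (sq_nonneg _))
    linarith
  -- difference of gradients
  have hGdiff : ∀ y, G y = ((n : ℝ) * m)⁻¹ • (∑ i, ∑ j,
      (deriv (φ i j) (rinner (a i j) y) - deriv (φ i j) (rinner (a i j) xstar)) • a i j)
      + lam • (y - xstar) := by
    intro y
    have h1 : G y = G y - G xstar := by rw [hG0, sub_zero]
    rw [h1]
    show (((n : ℝ) * m)⁻¹ • (∑ i, ∑ j, deriv (φ i j) (rinner (a i j) y) • a i j) + lam • y)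
      - (((n : ℝ) * m)⁻¹ • (∑ i, ∑ j, deriv (φ i j) (rinner (a i j) xstar) • a i j)
        + lam • xstar) = _
    rw [← sum_smul_sub (fun i j => deriv (φ i j) (rinner (a i j) y))
      (fun i j => deriv (φ i j) (rinner (a i j) xstar)) a]
    rw [smul_sub ((n : ℝ) * m)⁻¹, smul_sub lam]
    abel
  -- main induction
  have main : ∀ k, ∀ t, t ≤ k → ‖x t - xstar‖ ^ 2 ≤ r2 := by
    intro k
    induction k with
    | zero =>
      intro t ht
      have : t = 0 := Nat.le_zero.mp ht
      rw [this]; exact h0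
    | succ k ih =>
      intro t ht
      rcases Nat.lt_succ_iff_lt_or_eq.mp (Nat.lt_succ_of_le ht) with h | h
      · exact ih t (Nat.lt_succ_iff.mp h)
      · rw [h]
        -- the contraction step
        set δ : Euc d := x k - xstar with hδdef
        have hnorm_le : ∀ t', t' ≤ k → ‖x t' - xstar‖ ≤ r := by
          intro t' ht'
          have h2 := ih t' ht'
          nlinarith [norm_nonneg (x t' - xstar), hrpos]
        have hδr : ‖δ‖ ≤ r := hnorm_le k le_rfl
        set M : Matrix (Fin d) (Fin d) ℝ :=
          Hmat a (fun i j => c i j k) + lam • (1 : Matrix (Fin d) (Fin d) ℝ) with hM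
        have hunit : IsUnit M.det := det_unit_of_pos hlam M (hposM k)
        -- error vector
        set e : Fin n → Fin m → ℝ := fun i j =>
          c i j k * rinner (a i j) δ -
            (deriv (φ i j) (rinner (a i j) (x k)) - deriv (φ i j) (rinner (a i j) xstar))
          with he
        have hE : mulVecE M δ - G (x k)
            = ((n : ℝ) * m)⁻¹ • ∑ i, ∑ j, e i j • a i j := by
          rw [hM, mulVecE_add, mulVecE_Hmat, mulVecE_smul_one, hGdiff (x k)]
          have : lam • δ = lam • (x k - xstar) := by rw [hδdef]
          rw [← this]
          rw [show (((n : ℝ) * m)⁻¹ • ∑ i, ∑ j, ((fun i j => c i j k) i j * rinner (a i j) δ) • a i j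
            + lam • δ)
            - (((n : ℝ) * m)⁻¹ • (∑ i, ∑ j,
              (deriv (φ i j) (rinner (a i j) (x k)) - deriv (φ i j) (rinner (a i j) xstar)) • a i j)
              + lam • δ)
            = ((n : ℝ) * m)⁻¹ • (∑ i, ∑ j, (c i j k * rinner (a i j) δ) • a i j)
              - ((n : ℝ) * m)⁻¹ • (∑ i, ∑ j,
              (deriv (φ i j) (rinner (a i j) (x k)) - deriv (φ i j) (rinner (a i j) xstar)) • a i j)
            from by abel]
          rw [← smul_sub, sum_smul_sub]
        -- per-term bound
        have hterm : ∀ i j, |e i j| ≤ 2 * ν * R ^ 2 * r2 := by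
          intro i j
          obtain ⟨ρ, hρ0, hρ1, hceq⟩ := hcc k i j
          have hinner_bd : ∀ t', t' ≤ k → |rinner (a i j) (x t') - rinner (a i j) xstar| ≤ R * r := by
            intro t' ht'
            have : rinner (a i j) (x t') - rinner (a i j) xstar = inner ℝ (a i j) (x t' - xstar) := by
              simp [rinner, inner_sub_right]
            rw [this]
            calc |(inner ℝ (a i j) (x t' - xstar) : ℝ)| ≤ ‖a i j‖ * ‖x t' - xstar‖ :=
                abs_real_inner_le_norm _ _
              _ ≤ R * r := by
                have := hnorm_le t' ht'
                have := hRub i j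
                have := norm_nonneg (x t' - xstar)
                nlinarith [hrpos.le, hR.le]
          have hc_bd : |c i j k - φ'' i j (rinner (a i j) xstar)| ≤ ν * (R * r) := by
            have hceq2 : c i j k - φ'' i j (rinner (a i j) xstar)
                = ∑ t' ∈ Finset.range (k + 1),
                  ρ t' * (φ'' i j (rinner (a i j) (x t')) - φ'' i j (rinner (a i j) xstar)) := by
              rw [hceq]
              rw [show ∀ A B : ℝ, A - B = A - 1 * B from fun A B => by ring]
              rw [← hρ1, Finset.sum_mul, ← Finset.sum_sub_distrib]
              exact Finset.sum_congr rfl fun t' _ => by ring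
            rw [hceq2]
            calc |∑ t' ∈ Finset.range (k + 1),
                  ρ t' * (φ'' i j (rinner (a i j) (x t')) - φ'' i j (rinner (a i j) xstar))|
                ≤ ∑ t' ∈ Finset.range (k + 1),
                  |ρ t' * (φ'' i j (rinner (a i j) (x t')) - φ'' i j (rinner (a i j) xstar))| :=
                Finset.abs_sum_le_sum_abs _ _
              _ ≤ ∑ t' ∈ Finset.range (k + 1), ρ t' * (ν * (R * r)) := by
                refine Finset.sum_le_sum fun t' ht' => ?_
                have htk : t' ≤ k := Nat.lt_succ_iff.mp (Finset.mem_range.mp ht')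
                rw [abs_mul, abs_of_nonneg (hρ0 t' htk)]
                refine mul_le_mul_of_nonneg_left ?_ (hρ0 t' htk)
                calc |φ'' i j (rinner (a i j) (x t')) - φ'' i j (rinner (a i j) xstar)|
                    ≤ ν * |rinner (a i j) (x t') - rinner (a i j) xstar| := hlip i j _ _
                  _ ≤ ν * (R * r) := mul_le_mul_of_nonneg_left (hinner_bd t' htk) hν.le
              _ = ν * (R * r) := by rw [← Finset.sum_mul, hρ1, one_mul]
          have hsδ : rinner (a i j) (x k) - rinner (a i j) xstar = rinner (a i j) δ := by
            simp [rinner, hδdef, inner_sub_right]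
          have htay : |deriv (φ i j) (rinner (a i j) (x k)) - deriv (φ i j) (rinner (a i j) xstar)
              - φ'' i j (rinner (a i j) xstar) * (rinner (a i j) (x k) - rinner (a i j) xstar)|
              ≤ ν * (rinner (a i j) (x k) - rinner (a i j) xstar) ^ 2 := by
            rw [hφ'' i j]
            exact taylor_aux (hsmooth i j) hν.le
              (by intro s' t'; have := hlip i j s' t'; rwa [hφ'' i j] at this) _ _
          have habs : |rinner (a i j) δ| ≤ R * r := by
            rw [← hsδ]; exact hinner_bd k le_rfl
          have hdecomp : e i j = (c i j k - φ'' i j (rinner (a i j) xstar)) * rinner (a i j) δ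
              - (deriv (φ i j) (rinner (a i j) (x k)) - deriv (φ i j) (rinner (a i j) xstar)
                - φ'' i j (rinner (a i j) xstar) * (rinner (a i j) (x k) - rinner (a i j) xstar)) := by
            rw [he]
            simp only [hsδ]
            ring
          rw [hdecomp]
          have h1 : |(c i j k - φ'' i j (rinner (a i j) xstar)) * rinner (a i j) δ|
              ≤ (ν * (R * r)) * (R * r) := by
            rw [abs_mul]
            refine mul_le_mul hc_bd habs (abs_nonneg _) (by positivity)
          have h2 : |deriv (φ i j) (rinner (a i j) (x k)) - deriv (φ i j) (rinner (a i j) xstar)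
              - φ'' i j (rinner (a i j) xstar) * (rinner (a i j) (x k) - rinner (a i j) xstar)|
              ≤ ν * (R * r) ^ 2 := by
            refine htay.trans ?_
            have : (rinner (a i j) (x k) - rinner (a i j) xstar) ^ 2 ≤ (R * r) ^ 2 := by
              rw [← sq_abs]
              exact pow_le_pow_left₀ (abs_nonneg _) (by rw [hsδ]; exact habs) 2
            exact mul_le_mul_of_nonneg_left this hν.le
          calc |(c i j k - φ'' i j (rinner (a i j) xstar)) * rinner (a i j) δ
              - (deriv (φ i j) (rinner (a i j) (x k)) - deriv (φ i j) (rinner (a i j) xstar)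
                - φ'' i j (rinner (a i j) xstar) * (rinner (a i j) (x k) - rinner (a i j) xstar))|
              ≤ |(c i j k - φ'' i j (rinner (a i j) xstar)) * rinner (a i j) δ|
                + |deriv (φ i j) (rinner (a i j) (x k)) - deriv (φ i j) (rinner (a i j) xstar)
                - φ'' i j (rinner (a i j) xstar) * (rinner (a i j) (x k) - rinner (a i j) xstar)| :=
              abs_sub _ _
            _ ≤ (ν * (R * r)) * (R * r) + ν * (R * r) ^ 2 := add_le_add h1 h2
            _ = 2 * ν * R ^ 2 * r2 := by rw [← hrsq]; ring
        -- norm of the error vector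
        have hEnorm : ‖mulVecE M δ - G (x k)‖ ≤ 2 * ν * R ^ 3 * r2 := by
          rw [hE]
          rw [norm_smul]
          have h1 : ‖∑ i, ∑ j, e i j • a i j‖ ≤ (n : ℝ) * m * (2 * ν * R ^ 3 * r2) := by
            calc ‖∑ i : Fin n, ∑ j : Fin m, e i j • a i j‖
                ≤ ∑ i : Fin n, ‖∑ j : Fin m, e i j • a i j‖ := norm_sum_le _ _
              _ ≤ ∑ i : Fin n, ∑ j : Fin m, ‖e i j • a i j‖ :=
                Finset.sum_le_sum fun i _ => norm_sum_le _ _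
              _ ≤ ∑ i : Fin n, ∑ j : Fin m, 2 * ν * R ^ 2 * r2 * R := by
                refine Finset.sum_le_sum fun i _ => Finset.sum_le_sum fun j _ => ?_
                rw [norm_smul, Real.norm_eq_abs]
                refine mul_le_mul (hterm i j) (hRub i j) (norm_nonneg _) (by positivity)
              _ = (n : ℝ) * m * (2 * ν * R ^ 3 * r2) := by
                simp [Finset.sum_const, Finset.card_univ]
                ring
          calc ‖((n : ℝ) * m)⁻¹‖ * ‖∑ i, ∑ j, e i j • a i j‖
              ≤ ((n : ℝ) * m)⁻¹ * ((n : ℝ) * m * (2 * ν * R ^ 3 * r2)) := by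
                rw [Real.norm_eq_abs, abs_of_pos (by positivity : (0:ℝ) < ((n : ℝ) * m)⁻¹)]
                exact mul_le_mul_of_nonneg_left h1 (by positivity)
            _ = 2 * ν * R ^ 3 * r2 := by field_simp
        -- the step identity
        have hxk1 : x (k + 1) - xstar = mulVecE M⁻¹ (mulVecE M δ - G (x k)) := by
          rw [mulVecE_sub, mulVecE_cancel hunit, hstep k, hgradP (x k), hδdef]
          abel
        -- conclusion
        have hfinal : ‖x (k + 1) - xstar‖ ≤ lam⁻¹ * (2 * ν * R ^ 3 * r2) := by
          rw [hxk1]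
          refine (inv_bound hlam M (hposM k) _).trans ?_
          exact mul_le_mul_of_nonneg_left hEnorm (by positivity)
        have hnum : (lam⁻¹ * (2 * ν * R ^ 3 * r2)) ^ 2 ≤ r2 := by
          have heq : (lam⁻¹ * (2 * ν * R ^ 3 * r2)) ^ 2 = (1/3) * r2 := by
            rw [hr2]
            field_simp
            ring
          rw [heq]
          linarith
        calc ‖x (k + 1) - xstar‖ ^ 2 ≤ (lam⁻¹ * (2 * ν * R ^ 3 * r2)) ^ 2 :=
            pow_le_pow_left₀ (norm_nonneg _) hfinal 2
          _ ≤ r2 := hnum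
  exact fun k => main k k le_rfl
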